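/- Let α, β, ρ, x0, ū be positive real numbers with β > ρ·x0, and let t_f > 0. Then F is differentiable on (0, t_f) with F′(τ) = ū·exp((−α − ρ·ū)·(t_f − τ))·(ρ·x0·exp(−α·τ) − β) < 0 for all τ ∈ (0, t_f); in particular, F is strictly decreasing on [0, t_f]. -/
import Mathlib


/-- `F τ` is the terminal value `x(t_f)` of the bilinear furnace model started at
`x(0) = x0`, with input `u ≡ 0` on `[0, τ)` and `u ≡ ū` on `[τ, t_f]`. -/
noncomputable def F (α β ρ x0 ubar tf τ : ℝ) : ℝ :=
  Real.exp ((-α - ρ * ubar) * (tf - τ)) *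
      (x0 * Real.exp (-α * τ) - β * ubar / (α + ρ * ubar)) +
    β * ubar / (α + ρ * ubar)

lemma F_hasDerivAt (α β ρ x0 ubar tf τ : ℝ) (hαρ : α + ρ * ubar ≠ 0) :
    HasDerivAt (F α β ρ x0 ubar tf)
      (ubar * Real.exp ((-α - ρ * ubar) * (tf - τ)) *
        (ρ * x0 * Real.exp (-α * τ) - β)) τ := by
  have h1 : HasDerivAt (fun t : ℝ => (-α - ρ * ubar) * (tf - t)) (α + ρ * ubar) τ := by
    have := ((hasDerivAt_id τ).const_sub tf).const_mul (-α - ρ * ubar)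
    simpa using this.congr_deriv (by ring)
  have h2 : HasDerivAt (fun t : ℝ => Real.exp ((-α - ρ * ubar) * (tf - t)))
      (Real.exp ((-α - ρ * ubar) * (tf - τ)) * (α + ρ * ubar)) τ := h1.exp
  have h3 : HasDerivAt (fun t : ℝ => x0 * Real.exp (-α * t) - β * ubar / (α + ρ * ubar))
      (x0 * (Real.exp (-α * τ) * -α)) τ := by
    have := (((hasDerivAt_id τ).const_mul (-α)).exp.const_mul x0).sub_const
      (β * ubar / (α + ρ * ubar))
    simpa [mul_comm] using this
  have h4 := (h2.mul h3).add_const (β * ubar / (α + ρ * ubar))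
  have heq : Real.exp ((-α - ρ * ubar) * (tf - τ)) * (α + ρ * ubar) *
        (x0 * Real.exp (-α * τ) - β * ubar / (α + ρ * ubar)) +
      Real.exp ((-α - ρ * ubar) * (tf - τ)) * (x0 * (Real.exp (-α * τ) * -α)) =
      ubar * Real.exp ((-α - ρ * ubar) * (tf - τ)) *
        (ρ * x0 * Real.exp (-α * τ) - β) := by
    field_simp
    ring
  exact heq ▸ h4

theorem stmt_9 (α β ρ x0 ubar : ℝ)
    (hα : 0 < α) (hβ : 0 < β) (hρ : 0 < ρ) (hx0 : 0 < x0) (hu : 0 < ubar)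
    (hβρ : β > ρ * x0) (tf : ℝ) (htf : 0 < tf) :
    (∀ τ ∈ Set.Ioo (0:ℝ) tf,
        HasDerivAt (F α β ρ x0 ubar tf)
          (ubar * Real.exp ((-α - ρ * ubar) * (tf - τ)) *
            (ρ * x0 * Real.exp (-α * τ) - β)) τ ∧
        ubar * Real.exp ((-α - ρ * ubar) * (tf - τ)) *
            (ρ * x0 * Real.exp (-α * τ) - β) < 0) ∧
      StrictAntiOn (F α β ρ x0 ubar tf) (Set.Icc 0 tf) := by
  have hαρ : α + ρ * ubar ≠ 0 := by positivity
  have hneg : ∀ τ : ℝ, 0 < τ → ubar * Real.exp ((-α - ρ * ubar) * (tf - τ)) *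
      (ρ * x0 * Real.exp (-α * τ) - β) < 0 := by
    intro τ hτ
    have hlt : ρ * x0 * Real.exp (-α * τ) - β < 0 := by
      have h1 : Real.exp (-α * τ) ≤ 1 := by
        apply Real.exp_le_one_iff.mpr
        nlinarith
      nlinarith [Real.exp_pos (-α * τ)]
    have hpos : 0 < ubar * Real.exp ((-α - ρ * ubar) * (tf - τ)) := by positivity
    exact mul_neg_of_pos_of_neg hpos hlt
  constructor
  · intro τ hτ
    exact ⟨F_hasDerivAt α β ρ x0 ubar tf τ hαρ, hneg τ hτ.1⟩
  · apply strictAntiOn_of_deriv_neg (convex_Icc 0 tf)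
    · apply Continuous.continuousOn
      unfold F
      continuity
    · intro τ hτ
      rw [interior_Icc] at hτ
      rw [(F_hasDerivAt α β ρ x0 ubar tf τ hαρ).deriv]
      exact hneg τ hτ.1
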